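/- Let σ satisfy the hypotheses above with τ of order q. Then the quotient B_n(σ)/A_n(σ) is isomorphic to the symmetric group S_n, via the map sending σ_s mod A_n(σ) to the transposition (s, s+1). -/

import Mathlib

/-- The shift of a permutation of `ℕ` up by `d`: fixes `{0,…,d-1}` and acts as `σ`
conjugated by `k ↦ k + d` above. -/
def shift (d : ℕ) (σ : Equiv.Perm ℕ) : Equiv.Perm ℕ where
  toFun k := if k < d then k else σ (k - d) + d
  invFun k := if k < d then k else σ⁻¹ (k - d) + d
  left_inv k := by
    by_cases h : k < d
    · simp [h]
    · dsimp only
      rw [if_neg h, if_neg (by omega), Nat.add_sub_cancel, Equiv.Perm.inv_def, Equiv.symm_apply_apply]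
      omega
  right_inv k := by
    by_cases h : k < d
    · simp [h]
    · dsimp only
      rw [if_neg h, if_neg (by omega), Nat.add_sub_cancel, Equiv.Perm.inv_def, Equiv.apply_symm_apply]
      omega

/-- The involution of `ℕ` swapping the blocks `{0,…,d-1}` and `{d,…,2d-1}`. -/
def theta (d : ℕ) : Equiv.Perm ℕ :=
  Function.Involutive.toPerm
    (fun k => if k < d then k + d else if k < 2 * d then k - d else k)
    (by intro k; dsimp only; split_ifs <;> omega)

theorem Equiv.Perm.apply_inv_self {α : Type*} (e : Equiv.Perm α) (x : α) : e (e⁻¹ x) = x :=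
  e.apply_symm_apply x

open Equiv Equiv.Perm

section Aux

lemma shift_apply_lt (d : ℕ) (a : Perm ℕ) {k : ℕ} (h : k < d) : shift d a k = k :=
  if_pos h

lemma shift_apply_ge (d : ℕ) (a : Perm ℕ) {k : ℕ} (h : d ≤ k) :
    shift d a k = a (k - d) + d := if_neg (by omega)

lemma shift_apply_add (d : ℕ) (a : Perm ℕ) (k : ℕ) : shift d a (d + k) = d + a k := by
  rw [shift_apply_ge d a (by omega), Nat.add_sub_cancel_left]
  omega

lemma shift_mul (d : ℕ) (a b : Perm ℕ) : shift d (a * b) = shift d a * shift d b := by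
  ext k
  rcases lt_or_ge k d with h | h
  · rw [Perm.mul_apply, shift_apply_lt d _ h, shift_apply_lt d _ h, shift_apply_lt d _ h]
  · rw [Perm.mul_apply, shift_apply_ge d _ h, shift_apply_ge d _ h,
      shift_apply_ge d _ (by omega : d ≤ b (k - d) + d), Nat.add_sub_cancel, Perm.mul_apply]

/-- `shift d` as a monoid hom. -/
def shiftHom (d : ℕ) : Perm ℕ →* Perm ℕ := MonoidHom.mk' (shift d) (shift_mul d)

lemma shift_zpow (d : ℕ) (a : Perm ℕ) (z : ℤ) : shift d (a ^ z) = (shift d a) ^ z :=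
  map_zpow (shiftHom d) a z

/-- Permutations fixing everything `≥ d` form a subgroup. -/
def fixGe (d : ℕ) : Subgroup (Perm ℕ) where
  carrier := {a | ∀ k, d ≤ k → a k = k}
  one_mem' := fun _ _ => rfl
  mul_mem' := by intro a b ha hb k hk; rw [Perm.mul_apply, hb k hk, ha k hk]
  inv_mem' := by
    intro a ha k hk
    conv_lhs => rw [← ha k hk]
    exact a.symm_apply_apply k

lemma fixGe_mem {d : ℕ} {a : Perm ℕ} : a ∈ fixGe d ↔ ∀ k, d ≤ k → a k = k := Iff.rfl

lemma fixGe_apply_lt {d : ℕ} {a : Perm ℕ} (ha : a ∈ fixGe d) {k : ℕ} (h : k < d) : a k < d := by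
  by_contra hc
  have h2 : a (a k) = a k := ha (a k) (by omega)
  have := a.injective h2
  omega

lemma block_index_eq {d a b x y : ℕ} (hx : x < d) (hy : y < d)
    (h : a * d + x = b * d + y) : a = b := by
  rcases lt_trichotomy a b with hab | hab | hab
  · have h3 : a * d + d ≤ b * d := by
      calc a * d + d = (a + 1) * d := by ring
        _ ≤ b * d := Nat.mul_le_mul_right d (by omega)
    omega
  · exact hab
  · have h3 : b * d + d ≤ a * d := by
      calc b * d + d = (b + 1) * d := by ring
        _ ≤ a * d := Nat.mul_le_mul_right d (by omega)
    omega

end Aux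

section Block

variable (d n : ℕ) (ς₁ τ : Perm ℕ)

/-- `g` permutes the `n` blocks of size `d` according to `w`, acting on block `i` by
`ς₁ ^ (w i - i) * τ ^ (z i)`, and fixes everything `≥ n * d`. -/
def BlockP (g : Perm ℕ) (w : Perm (Fin n)) : Prop :=
  (∀ k, n * d ≤ k → g k = k) ∧
  ∃ z : Fin n → ℤ, ∀ i : Fin n, ∀ k, k < d →
    g ((i : ℕ) * d + k) = ((w i : ℕ)) * d + (ς₁ ^ ((w i : ℤ) - (i : ℤ)) * τ ^ (z i)) k

variable {d n ς₁ τ}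
variable (hc : Commute ς₁ τ) (h1 : ς₁ ∈ fixGe d) (ht : τ ∈ fixGe d)

include hc in
lemma comp_mul (a b e f : ℤ) :
    (ς₁ ^ a * τ ^ b) * (ς₁ ^ e * τ ^ f) = ς₁ ^ (a + e) * τ ^ (b + f) := by
  calc ς₁ ^ a * τ ^ b * (ς₁ ^ e * τ ^ f) = ς₁ ^ a * (τ ^ b * ς₁ ^ e) * τ ^ f := by group
    _ = ς₁ ^ a * (ς₁ ^ e * τ ^ b) * τ ^ f := by rw [((hc.zpow_zpow e b).symm).eq]
    _ = ς₁ ^ (a + e) * τ ^ (b + f) := by rw [zpow_add, zpow_add]; group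

include h1 ht in
lemma comp_mem (a b : ℤ) : ς₁ ^ a * τ ^ b ∈ fixGe d :=
  mul_mem (zpow_mem h1 a) (zpow_mem ht b)

lemma blockP_one : BlockP d n ς₁ τ 1 1 := by
  refine ⟨fun k _ => rfl, fun _ => 0, fun i k hk => ?_⟩
  simp

include hc h1 ht in
lemma blockP_mul {g g' : Perm ℕ} {w w' : Perm (Fin n)} (hg : BlockP d n ς₁ τ g w)
    (hg' : BlockP d n ς₁ τ g' w') : BlockP d n ς₁ τ (g * g') (w * w') := by
  obtain ⟨hfix, z, hz⟩ := hg
  obtain ⟨hfix', z', hz'⟩ := hg'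
  refine ⟨fun k hk => by rw [Equiv.Perm.mul_apply, hfix' k hk, hfix k hk],
    fun i => z (w' i) + z' i, fun i k hk => ?_⟩
  have hlt : (ς₁ ^ ((w' i : ℤ) - (i : ℤ)) * τ ^ z' i) k < d :=
    fixGe_apply_lt (comp_mem h1 ht _ _) hk
  have key : ς₁ ^ ((w (w' i) : ℤ) - ((w' i : ℕ) : ℤ)) * τ ^ z (w' i) *
      (ς₁ ^ ((w' i : ℤ) - (i : ℤ)) * τ ^ z' i)
      = ς₁ ^ ((w (w' i) : ℤ) - (i : ℤ)) * τ ^ (z (w' i) + z' i) := by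
    rw [comp_mul hc]
    congr 2
    ring
  show g (g' ((i : ℕ) * d + k)) = ((w (w' i) : ℕ)) * d +
    (ς₁ ^ ((w (w' i) : ℤ) - (i : ℤ)) * τ ^ (z (w' i) + z' i)) k
  rw [hz' i k hk, hz (w' i) _ hlt]
  congr 1
  calc (ς₁ ^ ((w (w' i) : ℤ) - ((w' i : ℕ) : ℤ)) * τ ^ z (w' i))
        ((ς₁ ^ ((w' i : ℤ) - (i : ℤ)) * τ ^ z' i) k)
      = (ς₁ ^ ((w (w' i) : ℤ) - ((w' i : ℕ) : ℤ)) * τ ^ z (w' i) *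
        (ς₁ ^ ((w' i : ℤ) - (i : ℤ)) * τ ^ z' i)) k := rfl
    _ = (ς₁ ^ ((w (w' i) : ℤ) - (i : ℤ)) * τ ^ (z (w' i) + z' i)) k := by rw [key]

include hc h1 ht in
lemma blockP_inv {g : Perm ℕ} {w : Perm (Fin n)} (hg : BlockP d n ς₁ τ g w) :
    BlockP d n ς₁ τ g⁻¹ w⁻¹ := by
  obtain ⟨hfix, z, hz⟩ := hg
  refine ⟨fun k hk => ?_, fun j => - z (w⁻¹ j), fun j k hk => ?_⟩
  · conv_lhs => rw [← hfix k hk]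
    exact g.symm_apply_apply k
  · rw [Equiv.Perm.inv_eq_iff_eq]
    have hlt : (ς₁ ^ (((w⁻¹ j : Fin n) : ℤ) - (j : ℤ)) * τ ^ (-z (w⁻¹ j))) k < d :=
      fixGe_apply_lt (comp_mem h1 ht _ _) hk
    rw [hz (w⁻¹ j) _ hlt]
    have key : ς₁ ^ ((w (w⁻¹ j) : ℤ) - ((w⁻¹ j : Fin n) : ℤ)) * τ ^ z (w⁻¹ j) *
        (ς₁ ^ (((w⁻¹ j : Fin n) : ℤ) - (j : ℤ)) * τ ^ (-z (w⁻¹ j))) = 1 := by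
      rw [comp_mul hc, Equiv.Perm.apply_inv_self, add_neg_cancel]
      have h0 : ((j : ℤ) - ((w⁻¹ j : Fin n) : ℤ) + (((w⁻¹ j : Fin n) : ℤ) - (j : ℤ))) = 0 := by
        ring
      rw [h0, zpow_zero, zpow_zero, one_mul]
    have key2 : (ς₁ ^ ((w (w⁻¹ j) : ℤ) - ((w⁻¹ j : Fin n) : ℤ)) * τ ^ z (w⁻¹ j))
        ((ς₁ ^ (((w⁻¹ j : Fin n) : ℤ) - (j : ℤ)) * τ ^ (-z (w⁻¹ j))) k) = k := by
      calc (ς₁ ^ ((w (w⁻¹ j) : ℤ) - ((w⁻¹ j : Fin n) : ℤ)) * τ ^ z (w⁻¹ j))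
            ((ς₁ ^ (((w⁻¹ j : Fin n) : ℤ) - (j : ℤ)) * τ ^ (-z (w⁻¹ j))) k)
          = (ς₁ ^ ((w (w⁻¹ j) : ℤ) - ((w⁻¹ j : Fin n) : ℤ)) * τ ^ z (w⁻¹ j) *
            (ς₁ ^ (((w⁻¹ j : Fin n) : ℤ) - (j : ℤ)) * τ ^ (-z (w⁻¹ j)))) k := rfl
        _ = k := by rw [key]; rfl
    rw [key2, Equiv.Perm.apply_inv_self]

include h1 ht in
lemma blockP_unique (hd : 0 < d) {g : Perm ℕ} {w w' : Perm (Fin n)}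
    (hg : BlockP d n ς₁ τ g w) (hg' : BlockP d n ς₁ τ g w') : w = w' := by
  obtain ⟨_, z, hz⟩ := hg
  obtain ⟨_, z', hz'⟩ := hg'
  ext i
  have e1 := hz i 0 hd
  have e2 := hz' i 0 hd
  have l1 : (ς₁ ^ ((w i : ℤ) - (i : ℤ)) * τ ^ (z i)) 0 < d :=
    fixGe_apply_lt (comp_mem h1 ht _ _) hd
  have l2 : (ς₁ ^ ((w' i : ℤ) - (i : ℤ)) * τ ^ (z' i)) 0 < d :=
    fixGe_apply_lt (comp_mem h1 ht _ _) hd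
  exact block_index_eq l1 l2 (by rw [← e1, ← e2])

end Block

/-- The block permutation induced by `g` (if any). -/
noncomputable def blockPerm (d n : ℕ) (ς₁ τ : Perm ℕ) (g : Perm ℕ) : Perm (Fin n) :=
  open scoped Classical in
  if h : ∃ w, BlockP d n ς₁ τ g w then h.choose else 1

lemma blockPerm_eq {d n : ℕ} {ς₁ τ : Perm ℕ} (h1 : ς₁ ∈ fixGe d) (ht : τ ∈ fixGe d)
    (hd : 0 < d) {g : Perm ℕ} {w : Perm (Fin n)} (h : BlockP d n ς₁ τ g w) :
    blockPerm d n ς₁ τ g = w := by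
  have hex : ∃ w, BlockP d n ς₁ τ g w := ⟨w, h⟩
  rw [blockPerm]
  rw [dif_pos hex]
  exact blockP_unique h1 ht hd hex.choose_spec h

section Sigma

variable {d n : ℕ} {ς₁ ς₂ τ σ : Perm ℕ}
variable (h₁ : ∀ k, d ≤ k → ς₁ k = k) (h₂ : ∀ k, d ≤ k → ς₂ k = k)
variable (hσ : σ = theta d * ς₁ * shift d ς₂)

lemma theta_apply (d k : ℕ) :
    theta d k = if k < d then k + d else if k < 2 * d then k - d else k := rfl

include h₁ hσ in
lemma sigma_apply_lt {k : ℕ} (hk : k < d) : σ k = ς₁ k + d := by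
  have hlt : ς₁ k < d := fixGe_apply_lt (fixGe_mem.mpr h₁) hk
  rw [hσ]
  show theta d (ς₁ (shift d ς₂ k)) = ς₁ k + d
  rw [shift_apply_lt d _ hk, theta_apply, if_pos hlt]

include h₁ h₂ hσ in
lemma sigma_apply_mid {k : ℕ} (hk : k < d) : σ (d + k) = ς₂ k := by
  have hlt : ς₂ k < d := fixGe_apply_lt (fixGe_mem.mpr h₂) hk
  rw [hσ]
  show theta d (ς₁ (shift d ς₂ (d + k))) = ς₂ k
  rw [shift_apply_add, h₁ (d + ς₂ k) (by omega), theta_apply, if_neg (by omega),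
    if_pos (by omega)]
  omega

include h₁ h₂ hσ in
lemma sigma_apply_ge {k : ℕ} (hk : 2 * d ≤ k) : σ k = k := by
  rw [hσ]
  show theta d (ς₁ (shift d ς₂ k)) = k
  rw [shift_apply_ge d _ (by omega), h₂ (k - d) (by omega)]
  have hkk : k - d + d = k := by omega
  rw [hkk, h₁ k (by omega), theta_apply, if_neg (by omega), if_neg (by omega)]

include h₁ h₂ hσ in
lemma blockP_sigmaS (hτ : ς₁ * ς₂ = τ) (s : ℕ) (hs1 : 1 ≤ s) (hs2 : s ≤ n - 1) (hn : 3 ≤ n) :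
    BlockP d n ς₁ τ (shift ((s - 1) * d) σ)
      (Equiv.swap (⟨s - 1, by omega⟩ : Fin n) (⟨s, by omega⟩ : Fin n)) := by
  set a : Fin n := ⟨s - 1, by omega⟩ with ha_def
  set b : Fin n := ⟨s, by omega⟩ with hb_def
  have hva : (a : ℕ) = s - 1 := rfl
  have hvb : (b : ℕ) = s := rfl
  have hsd : (s - 1) * d + d = s * d := by
    calc (s - 1) * d + d = ((s - 1) + 1) * d := by ring
      _ = s * d := by congr 1; omega
  have hs1d : (s - 1) * d + 2 * d = (s + 1) * d := by
    calc (s - 1) * d + 2 * d = ((s - 1) + 2) * d := by ring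
      _ = (s + 1) * d := by congr 1; omega
  have hnd : (s + 1) * d ≤ n * d := Nat.mul_le_mul_right d (by omega)
  constructor
  · intro k hk
    have hle : (s - 1) * d ≤ k := by omega
    have h2d : 2 * d ≤ k - (s - 1) * d := by omega
    rw [shift_apply_ge _ _ hle, sigma_apply_ge h₁ h₂ hσ h2d]
    omega
  · refine ⟨fun i => if (i : ℕ) = s then 1 else 0, fun i k hk => ?_⟩
    beta_reduce
    by_cases hi1 : (i : ℕ) = s - 1
    · have hia : i = a := Fin.ext (by rw [hi1, hva])
      rw [hia, Equiv.swap_apply_left, hva, hvb, if_neg (by omega)]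
      have he : ((s : ℕ) : ℤ) - (((s - 1 : ℕ)) : ℤ) = 1 := by omega
      rw [he, zpow_one, zpow_zero, mul_one]
      rw [shift_apply_add ((s - 1) * d) σ k, sigma_apply_lt h₁ hσ hk]
      omega
    · by_cases hi2 : (i : ℕ) = s
      · have hib : i = b := Fin.ext (by rw [hi2, hvb])
        rw [hib, Equiv.swap_apply_right, hva, hvb, if_pos rfl]
        have he : (((s - 1 : ℕ)) : ℤ) - ((s : ℕ) : ℤ) = -1 := by omega
        rw [he, zpow_one]
        have hcomp : ς₁ ^ (-1 : ℤ) * τ = ς₂ := by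
          rw [zpow_neg_one, ← hτ, inv_mul_cancel_left]
        rw [hcomp]
        have hpt : s * d + k = (s - 1) * d + (d + k) := by omega
        rw [hpt, shift_apply_add, sigma_apply_mid h₁ h₂ hσ hk]
      · have hia : i ≠ a := fun h => hi1 ((congrArg Fin.val h).trans hva)
        have hib : i ≠ b := fun h => hi2 ((congrArg Fin.val h).trans hvb)
        rw [Equiv.swap_apply_of_ne_of_ne hia hib, if_neg hi2, sub_self, zpow_zero, zpow_zero,
          one_mul, Perm.one_apply]
        rcases Nat.lt_or_ge (i : ℕ) (s - 1) with h | h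
        · have hx : (i : ℕ) * d + d ≤ (s - 1) * d := by
            calc (i : ℕ) * d + d = ((i : ℕ) + 1) * d := by ring
              _ ≤ (s - 1) * d := Nat.mul_le_mul_right d (by omega)
          rw [shift_apply_lt _ _ (by omega)]
        · have hgt : s < (i : ℕ) := by omega
          have hx : (s + 1) * d ≤ (i : ℕ) * d := Nat.mul_le_mul_right d (by omega)
          rw [shift_apply_ge _ _ (by omega), sigma_apply_ge h₁ h₂ hσ (by omega)]
          omega

end Sigma

lemma blockP_shiftTau {d n : ℕ} {ς₁ τ : Perm ℕ} (ht : τ ∈ fixGe d) (hd0 : 0 < d)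
    {k : ℕ} (hk : k < n) (m : ℤ) :
    BlockP d n ς₁ τ ((shift (k * d) τ) ^ m) 1 := by
  rw [← shift_zpow]
  have hkd : k * d + d ≤ n * d := by
    calc k * d + d = (k + 1) * d := by ring
      _ ≤ n * d := Nat.mul_le_mul_right d (by omega)
  refine ⟨fun x hx => ?_, fun i => if (i : ℕ) = k then m else 0, fun i j hj => ?_⟩
  · rw [shift_apply_ge _ _ (by omega), fixGe_mem.mp (zpow_mem ht m) (x - k * d) (by omega)]
    omega
  · simp only [Perm.one_apply, sub_self, zpow_zero, one_mul]
    by_cases hik : (i : ℕ) = k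
    · rw [if_pos hik, hik, shift_apply_add]
    · rw [if_neg hik, zpow_zero]
      rcases Nat.lt_or_ge (i : ℕ) k with h | h
      · have hx : (i : ℕ) * d + d ≤ k * d := by
          calc (i : ℕ) * d + d = ((i : ℕ) + 1) * d := by ring
            _ ≤ k * d := Nat.mul_le_mul_right d (by omega)
        rw [shift_apply_lt _ _ (by omega), Perm.one_apply]
      · have hik' : k < (i : ℕ) := by omega
        have hx : k * d + d ≤ (i : ℕ) * d := by
          calc k * d + d = (k + 1) * d := by ring
            _ ≤ (i : ℕ) * d := Nat.mul_le_mul_right d (by omega)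
        rw [shift_apply_ge _ _ (by omega), fixGe_mem.mp (zpow_mem ht m) _ (by omega),
          Perm.one_apply]
        omega

lemma prod_shift_eval {d : ℕ} {τ : Perm ℕ} (ht : τ ∈ fixGe d) (c : ℕ → ℤ) (m : ℕ) :
    (∀ i k, i < m → k < d →
        ((List.range m).map (fun j => shift (j * d) (τ ^ (c j)))).prod (i * d + k)
      = i * d + (τ ^ (c i)) k)
    ∧ (∀ x, m * d ≤ x →
        ((List.range m).map (fun j => shift (j * d) (τ ^ (c j)))).prod x = x) := by
  induction m with
  | zero => exact ⟨fun i k hi _ => absurd hi (by omega), fun x _ => by simp⟩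
  | succ m ih =>
    have hstep : ((List.range (m + 1)).map (fun j => shift (j * d) (τ ^ (c j)))).prod
        = ((List.range m).map (fun j => shift (j * d) (τ ^ (c j)))).prod
          * shift (m * d) (τ ^ (c m)) := by
      rw [List.range_succ]
      simp
    rw [hstep]
    constructor
    · intro i k hi hk
      rw [Perm.mul_apply]
      by_cases him : i < m
      · have hx : i * d + d ≤ m * d := by
          calc i * d + d = (i + 1) * d := by ring
            _ ≤ m * d := Nat.mul_le_mul_right d (by omega)
        rw [shift_apply_lt _ _ (by omega), ih.1 i k him hk]
      · have him' : i = m := by omega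
        subst him'
        rw [shift_apply_add]
        exact ih.2 _ (Nat.le_add_right _ _)
    · intro x hx
      rw [Perm.mul_apply]
      have hmd : (m + 1) * d = m * d + d := by ring
      rw [shift_apply_ge _ _ (by omega), fixGe_mem.mp (zpow_mem ht (c m)) _ (by omega)]
      have hxx : x - m * d + m * d = x := by omega
      rw [hxx]
      exact ih.2 x (by omega)

/-- `Bₙ(σ)/Aₙ(σ)` is isomorphic to the symmetric group `Sₙ` via
`σ_s mod Aₙ(σ) ↦ (s, s+1)`.  This is stated via the first isomorphism theorem:
there is a surjective homomorphism `φ : Bₙ(σ) → Sₙ` with kernel `Aₙ(σ)` sending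
`σ_s` to the transposition `(s, s+1)`. -/
theorem stmt_14 (d n : ℕ) (hd : 2 ≤ d) (hn : 3 ≤ n) (ς₁ ς₂ τ : Equiv.Perm ℕ)
    (h₁ : ∀ k, d ≤ k → ς₁ k = k) (h₂ : ∀ k, d ≤ k → ς₂ k = k)
    (hτ : ς₁ * ς₂ = τ) (hτ' : ς₂ * ς₁ = τ)
    (σ : Equiv.Perm ℕ) (hσ : σ = theta d * ς₁ * shift d ς₂)
    (σs : ℕ → Equiv.Perm ℕ) (hσs : ∀ s, σs s = shift ((s - 1) * d) σ)
    (B T A : Subgroup (Equiv.Perm ℕ))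
    (hB : B = Subgroup.closure {x | ∃ s, 1 ≤ s ∧ s ≤ n - 1 ∧ x = σs s})
    (hT : T = Subgroup.closure {x | ∃ k < n, x ∈ Subgroup.zpowers (shift (k * d) τ)})
    (hA : A = B ⊓ T) :
    ∃ φ : ↥B →* Equiv.Perm (Fin n),
      Function.Surjective φ ∧
      φ.ker = A.subgroupOf B ∧
      ∀ (s : ℕ) (h1 : 1 ≤ s) (h2 : s ≤ n - 1) (hmem : σs s ∈ B),
        φ ⟨σs s, hmem⟩ =
          Equiv.swap (⟨s - 1, by omega⟩ : Fin n) (⟨s, by omega⟩ : Fin n) := by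
  have hd0 : 0 < d := by omega
  have hfix1 : ς₁ ∈ fixGe d := h₁
  have hfix2 : ς₂ ∈ fixGe d := h₂
  have hfixτ : τ ∈ fixGe d := by rw [← hτ]; exact mul_mem hfix1 hfix2
  have hc : Commute ς₁ τ := by
    show ς₁ * τ = τ * ς₁
    calc ς₁ * τ = ς₁ * (ς₂ * ς₁) := by rw [hτ']
      _ = (ς₁ * ς₂) * ς₁ := (mul_assoc _ _ _).symm
      _ = τ * ς₁ := by rw [hτ]
  have hgen : ∀ s (hs1 : 1 ≤ s) (hs2 : s ≤ n - 1), BlockP d n ς₁ τ (σs s)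
      (Equiv.swap (⟨s - 1, by omega⟩ : Fin n) (⟨s, by omega⟩ : Fin n)) := by
    intro s hs1 hs2
    rw [hσs s]
    exact blockP_sigmaS h₁ h₂ hσ hτ s hs1 hs2 hn
  have hex : ∀ g ∈ B, ∃ w, BlockP d n ς₁ τ g w := by
    intro g hg
    rw [hB] at hg
    refine Subgroup.closure_induction (p := fun x _ => ∃ w, BlockP d n ς₁ τ x w) ?_
      ⟨1, blockP_one⟩ ?_ ?_ hg
    · rintro x ⟨s, hs1, hs2, rfl⟩
      exact ⟨_, hgen s hs1 hs2⟩
    · rintro x y _ _ ⟨wx, hx⟩ ⟨wy, hy⟩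
      exact ⟨wx * wy, blockP_mul hc hfix1 hfixτ hx hy⟩
    · rintro x _ ⟨wx, hx⟩
      exact ⟨wx⁻¹, blockP_inv hc hfix1 hfixτ hx⟩
  have hmul : ∀ a b : ↥B, blockPerm d n ς₁ τ ((a * b : ↥B) : Perm ℕ)
      = blockPerm d n ς₁ τ (a : Perm ℕ) * blockPerm d n ς₁ τ (b : Perm ℕ) := by
    intro a b
    obtain ⟨wa, ha⟩ := hex a a.2
    obtain ⟨wb, hb⟩ := hex b b.2
    rw [blockPerm_eq hfix1 hfixτ hd0 ha, blockPerm_eq hfix1 hfixτ hd0 hb]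
    exact blockPerm_eq hfix1 hfixτ hd0 (blockP_mul hc hfix1 hfixτ ha hb)
  have hval : ∀ (s : ℕ) (hs1 : 1 ≤ s) (hs2 : s ≤ n - 1) (hmem : σs s ∈ B),
      MonoidHom.mk' (fun g : ↥B => blockPerm d n ς₁ τ (g : Perm ℕ)) hmul ⟨σs s, hmem⟩
        = Equiv.swap (⟨s - 1, by omega⟩ : Fin n) (⟨s, by omega⟩ : Fin n) :=
    fun s hs1 hs2 _ => blockPerm_eq hfix1 hfixτ hd0 (hgen s hs1 hs2)
  refine ⟨MonoidHom.mk' (fun g : ↥B => blockPerm d n ς₁ τ (g : Perm ℕ)) hmul, ?_, ?_, hval⟩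
  · -- surjectivity
    obtain ⟨m, rfl⟩ : ∃ m, n = m + 1 := ⟨n - 1, by omega⟩
    intro x
    have hx : x ∈ Submonoid.closure
        (Set.range fun i : Fin m => Equiv.swap (Fin.castSucc i) (Fin.succ i)) := by
      rw [Equiv.Perm.mclosure_swap_castSucc_succ]
      trivial
    refine Submonoid.closure_induction
      (motive := fun x _ => ∃ a, MonoidHom.mk'
        (fun g : ↥B => blockPerm d (m + 1) ς₁ τ (g : Perm ℕ)) hmul a = x) ?_ ⟨1, map_one _⟩
      ?_ hx
    · rintro x ⟨i, rfl⟩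
      have hi2 : (i : ℕ) + 1 ≤ (m + 1) - 1 := by omega
      have hmem : σs ((i : ℕ) + 1) ∈ B := by
        rw [hB]
        exact Subgroup.subset_closure ⟨(i : ℕ) + 1, by omega, hi2, rfl⟩
      refine ⟨⟨_, hmem⟩, ?_⟩
      rw [hval ((i : ℕ) + 1) (by omega) hi2 hmem]
      have e1 : (⟨(i : ℕ) + 1 - 1, by omega⟩ : Fin (m + 1)) = Fin.castSucc i :=
        Fin.ext (by show (i : ℕ) + 1 - 1 = (i : ℕ); omega)
      have e2 : (⟨(i : ℕ) + 1, by omega⟩ : Fin (m + 1)) = Fin.succ i :=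
        Fin.ext (by show (i : ℕ) + 1 = (i : ℕ) + 1; rfl)
      rw [e1, e2]
    · rintro x y _ _ ⟨a, rfl⟩ ⟨b, rfl⟩
      exact ⟨a * b, map_mul _ _ _⟩
  · -- kernel
    ext ⟨g, hg⟩
    rw [MonoidHom.mem_ker, Subgroup.mem_subgroupOf]
    simp only [MonoidHom.mk'_apply]
    rw [hA, Subgroup.mem_inf]
    constructor
    · intro h
      refine ⟨hg, ?_⟩
      obtain ⟨w, hw⟩ := hex g hg
      have hw1eq : w = 1 := (blockPerm_eq hfix1 hfixτ hd0 hw).symm.trans h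
      have hw1 : BlockP d n ς₁ τ g 1 := hw1eq ▸ hw
      obtain ⟨hfix, z, hz⟩ := hw1
      set c : ℕ → ℤ := fun j => if h : j < n then z ⟨j, h⟩ else 0 with hc_def
      have heval := prod_shift_eval hfixτ c n
      have hge : g = ((List.range n).map (fun j => shift (j * d) (τ ^ (c j)))).prod := by
        ext x
        rcases Nat.lt_or_ge x (n * d) with hx | hx
        · have hdx : x / d < n := by rwa [Nat.div_lt_iff_lt_mul hd0]
          have hmod : x % d < d := Nat.mod_lt _ hd0
          have hxe : x = x / d * d + x % d := (Nat.div_add_mod' x d).symm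
          rw [hxe, heval.1 (x / d) (x % d) hdx hmod]
          have hgx := hz ⟨x / d, hdx⟩ (x % d) hmod
          simp only [Perm.one_apply, sub_self, zpow_zero, one_mul] at hgx
          have hcx : c (x / d) = z ⟨x / d, hdx⟩ := by
            simp only [hc_def]
            exact dif_pos hdx
          rw [hcx]
          exact hgx
        · rw [hfix x hx, heval.2 x hx]
      rw [hge, hT]
      refine Subgroup.list_prod_mem _ ?_
      intro x hx
      rw [List.mem_map] at hx
      obtain ⟨j, hj, rfl⟩ := hx
      rw [List.mem_range] at hj
      rw [shift_zpow]
      exact Subgroup.subset_closure ⟨j, hj, Subgroup.mem_zpowers_iff.mpr ⟨c j, rfl⟩⟩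
    · rintro ⟨-, hgT⟩
      have hPT : BlockP d n ς₁ τ g 1 := by
        rw [hT] at hgT
        refine Subgroup.closure_induction (p := fun x _ => BlockP d n ς₁ τ x 1) ?_
          blockP_one ?_ ?_ hgT
        · rintro x ⟨k, hk, hzp⟩
          obtain ⟨mm, rfl⟩ := Subgroup.mem_zpowers_iff.mp hzp
          exact blockP_shiftTau hfixτ hd0 hk mm
        · intro x y _ _ px py
          have := blockP_mul hc hfix1 hfixτ px py
          rwa [mul_one] at this
        · intro x _ px
          have := blockP_inv hc hfix1 hfixτ px
          rwa [inv_one] at this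
      exact blockPerm_eq hfix1 hfixτ hd0 hPT
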